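/- Let I be a collection of i-element subsets of {1,...,n} such that no member is obtained from another by exchanging a single element. Then |I| ≤ (1/(n+1)) * C(n+1, i). -/

import Mathlib

/-- A collection of `i`-element subsets of `{1,...,n}` no member of which is
obtained from another by exchanging a single element (i.e., no two distinct
members are at Hamming distance 2) has at most `(1/(n+1)) * C(n+1, i)` members. -/
theorem stmt_2 (n i : ℕ) (hi : 1 ≤ i) (hin : i ≤ n)
    (𝓘 : Finset (Finset ℕ))
    (hmem : ∀ I ∈ 𝓘, I ⊆ Finset.Icc 1 n ∧ I.card = i)
    (hcode : ∀ I ∈ 𝓘, ∀ J ∈ 𝓘, I ≠ J → (I ∩ J).card ≠ i - 1) :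
    (𝓘.card : ℚ) ≤ (1 / ((n : ℚ) + 1)) * (Nat.choose (n + 1) i : ℚ) := by
  have hdisj : ∀ I ∈ 𝓘, ∀ J ∈ 𝓘, I ≠ J →
      Disjoint (I.powersetCard (i-1)) (J.powersetCard (i-1)) := by
    intro I hI J hJ hne
    rw [Finset.disjoint_left]
    intro K hKI hKJ
    rw [Finset.mem_powersetCard] at hKI hKJ
    obtain ⟨hKI, hKc⟩ := hKI
    obtain ⟨hKJ, -⟩ := hKJ
    have h1 : K ⊆ I ∩ J := Finset.subset_inter hKI hKJ
    have hge : i - 1 ≤ (I ∩ J).card := hKc ▸ Finset.card_le_card h1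
    have hIc := (hmem I hI).2
    have hJc := (hmem J hJ).2
    have hlt : (I ∩ J).card < i := by
      rcases lt_or_eq_of_le (hIc ▸ Finset.card_le_card (Finset.inter_subset_left (s₂ := J))) with h | h
      · exact h
      · exfalso
        have : I ∩ J = I := Finset.eq_of_subset_of_card_le Finset.inter_subset_left (by omega)
        have hIJ : I ⊆ J := by rw [← this]; exact Finset.inter_subset_right
        exact hne (Finset.eq_of_subset_of_card_le hIJ (by omega))
    exact hcode I hI J hJ hne (by omega)
  have key : 𝓘.card * i ≤ Nat.choose n (i - 1) := by
    have hb : (𝓘.biUnion (fun I => I.powersetCard (i-1))).card = 𝓘.card * i := by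
      rw [Finset.card_biUnion hdisj]
      rw [Finset.sum_congr rfl (fun I hI => ?_), Finset.sum_const, smul_eq_mul]
      rw [Finset.card_powersetCard, (hmem I hI).2]
      have : i - (i - 1) = 1 := by omega
      rw [← Nat.choose_symm (Nat.sub_le i 1), this, Nat.choose_one_right]
    have hsub : (𝓘.biUnion (fun I => I.powersetCard (i-1))) ⊆
        (Finset.Icc 1 n).powersetCard (i-1) := by
      intro K hK
      rw [Finset.mem_biUnion] at hK
      obtain ⟨I, hI, hKI⟩ := hK
      rw [Finset.mem_powersetCard] at hKI ⊢
      exact ⟨hKI.1.trans (hmem I hI).1, hKI.2⟩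
    have := Finset.card_le_card hsub
    rw [hb, Finset.card_powersetCard, Nat.card_Icc] at this
    simpa using this
  have hid : (n + 1) * Nat.choose n (i - 1) = Nat.choose (n + 1) i * i := by
    have := Nat.add_one_mul_choose_eq n (i - 1)
    have h1 : i - 1 + 1 = i := by omega
    rw [h1] at this
    exact this
  have hnat : 𝓘.card * (n + 1) ≤ Nat.choose (n + 1) i := by
    have h2 : 𝓘.card * i * (n + 1) ≤ Nat.choose n (i - 1) * (n + 1) :=
      Nat.mul_le_mul_right _ key
    have h3 : 𝓘.card * (n + 1) * i ≤ Nat.choose (n + 1) i * i := by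
      calc 𝓘.card * (n + 1) * i = 𝓘.card * i * (n + 1) := by ring
        _ ≤ Nat.choose n (i - 1) * (n + 1) := h2
        _ = Nat.choose (n + 1) i * i := by rw [mul_comm]; exact hid
    exact Nat.le_of_mul_le_mul_right h3 (by omega)
  have hpos : (0:ℚ) < (n:ℚ) + 1 := by positivity
  rw [one_div, inv_mul_eq_div, le_div_iff₀ hpos]
  exact_mod_cast hnat
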